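/- arXiv:1302.2271 — 2 statements merged into one kernel-verified Lean document; each statement's English description precedes it below -/
import Mathlib

section
/- Let P be a simple polygon with n ≥ 3 vertices and let s be a point of the interior of P. Then the visibility region V₀(s) weakly covers at least three edges of P; that is, there are at least three distinct edges of P whose relative interior contains a point t with the relative interior of segment[s, t] contained in the interior of P. -/
open Set

/-- The plane ℝ². -/
abbrev Plane := EuclideanSpace ℝ (Fin 2)

/-- The `i`-th edge of a polygon with vertices `v 0, …, v (n-1)`:
the segment from `v i` to `v ((i+1) % n)`. -/
def polyEdge (n : ℕ) (v : ℕ → Plane) (i : ℕ) : Set Plane :=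
  segment ℝ (v i) (v ((i + 1) % n))

/-- `P` is a simple polygon with vertices `v 0, …, v (n-1)`: a compact set with
nonempty connected interior whose frontier is the union of the `n` edges; the
vertices are pairwise distinct, consecutive edges meet exactly in their common
vertex, and non-consecutive edges are disjoint. -/
def IsSimplePolygon (n : ℕ) (P : Set Plane) (v : ℕ → Plane) : Prop :=
  IsCompact P ∧ IsConnected (interior P) ∧
  (∀ i < n, ∀ j < n, v i = v j → i = j) ∧
  (frontier P = ⋃ i ∈ Finset.range n, polyEdge n v i) ∧
  (∀ i < n, ∀ j < n, i ≠ j →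
    (j = (i + 1) % n → polyEdge n v i ∩ polyEdge n v j = {v j}) ∧
    (i = (j + 1) % n → polyEdge n v i ∩ polyEdge n v j = {v i}) ∧
    (j ≠ (i + 1) % n → i ≠ (j + 1) % n →
      Disjoint (polyEdge n v i) (polyEdge n v j)))

/-- A diffuse reflection path in `P` from `s` to `t` with `m` segments
(`m - 1` reflections), given by the points `p 0 = s, p 1, …, p m = t`:
all points lie in `P`, every intermediate point lies in the relative interior
(open segment) of some edge of `P`, and the relative interior of each segment
of the path lies in the interior of `P`. -/
def IsDiffusePath (n : ℕ) (P : Set Plane) (v : ℕ → Plane)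
    (s t : Plane) (m : ℕ) (p : ℕ → Plane) : Prop :=
  p 0 = s ∧ p m = t ∧ (∀ i ≤ m, p i ∈ P) ∧
  (∀ i, 0 < i → i < m → ∃ j < n, p i ∈ openSegment ℝ (v j) (v ((j + 1) % n))) ∧
  (∀ i < m, openSegment ℝ (p i) (p (i + 1)) ⊆ interior P)

/-- `Vis n P v s k` is `V_k(s)`: the set of points `t ∈ P` reachable from `s`
by a diffuse reflection path with at most `k` reflections. -/
def Vis (n : ℕ) (P : Set Plane) (v : ℕ → Plane) (s : Plane) (k : ℕ) : Set Plane :=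
  {t | t ∈ P ∧ ∃ m, m - 1 ≤ k ∧ ∃ p : ℕ → Plane, IsDiffusePath n P v s t m p}

/-- If `x ∈ interior P`, `y ∉ P`, `P` closed, then some point of the segment parametrized
between them is on the frontier; more precisely for the line `f u = s + u • d`. -/
lemma ray_hits_frontier {P : Set Plane} (hPc : IsClosed P) {s : Plane}
    (hs : s ∈ interior P) (d : Plane) {T : ℝ} (hT : s + T • d ∉ P) (hT0 : 0 ≤ T) :
    ∃ t ∈ Icc (0:ℝ) T, s + t • d ∈ frontier P := by
  by_contra h
  push_neg at h
  have hcont : Continuous (fun u : ℝ => s + u • d) := by continuity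
  have hpre : IsPreconnected (Icc (0:ℝ) T) := isPreconnected_Icc
  have hcover : Icc (0:ℝ) T ⊆ (fun u : ℝ => s + u • d) ⁻¹' (interior P) ∪
      (fun u : ℝ => s + u • d) ⁻¹' Pᶜ := by
    intro u hu
    rcases em (s + u • d ∈ P) with hmem | hmem
    · left
      have : s + u • d ∉ frontier P := h u hu
      simp only [frontier, mem_diff, not_and, not_not] at this
      exact this (subset_closure hmem)
    · right; exact hmem
  have h1 : (Icc (0:ℝ) T ∩ ((fun u : ℝ => s + u • d) ⁻¹' (interior P))).Nonempty := by
    refine ⟨0, ⟨le_refl 0, hT0⟩, ?_⟩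
    simpa using hs
  have h2 : (Icc (0:ℝ) T ∩ ((fun u : ℝ => s + u • d) ⁻¹' Pᶜ)).Nonempty :=
    ⟨T, ⟨hT0, le_refl T⟩, hT⟩
  obtain ⟨u, hu, h3, h4⟩ := hpre _ _ (isOpen_interior.preimage hcont)
    (hPc.isOpen_compl.preimage hcont) hcover h1 h2
  exact h4 (interior_subset h3)

/-- First hit of the frontier along a ray from an interior point. -/
lemma exists_first_hit {P : Set Plane} (hP : IsCompact P) {s : Plane}
    (hs : s ∈ interior P) (d : Plane) (hd : d ≠ 0) :
    ∃ t : ℝ, 0 < t ∧ s + t • d ∈ frontier P ∧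
      ∀ u, 0 < u → u < t → s + u • d ∈ interior P := by
  have hPc : IsClosed P := hP.isClosed
  -- find T with s + T • d ∉ P
  obtain ⟨R, hR⟩ := hP.isBounded.subset_closedBall s
  set T : ℝ := (|R| + 1) / ‖d‖ with hTdef
  have hdn : 0 < ‖d‖ := norm_pos_iff.mpr hd
  have hT0 : 0 ≤ T := div_nonneg (by positivity) hdn.le
  have hTout : s + T • d ∉ P := by
    intro hmem
    have := hR hmem
    rw [Metric.mem_closedBall, dist_eq_norm] at this
    have h1 : s + T • d - s = T • d := by abel
    rw [h1, norm_smul, Real.norm_eq_abs, abs_of_nonneg hT0, hTdef,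
      div_mul_cancel₀ _ hdn.ne'] at this
    have : (R:ℝ) < |R| + 1 := lt_of_le_of_lt (le_abs_self R) (by linarith)
    linarith [hR hmem, le_abs_self R]
  -- the hit set
  set S : Set ℝ := {t : ℝ | 0 ≤ t ∧ s + t • d ∈ frontier P} with hSdef
  have hcont : Continuous (fun u : ℝ => s + u • d) := by continuity
  have hSclosed : IsClosed S := by
    have : S = Ici (0:ℝ) ∩ (fun u : ℝ => s + u • d) ⁻¹' (frontier P) := by
      ext t; simp [hSdef, mem_Ici]
    rw [this]
    exact isClosed_Ici.inter (isClosed_frontier.preimage hcont)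
  have hSne : S.Nonempty := by
    obtain ⟨t, ht, htf⟩ := ray_hits_frontier hPc hs d hTout hT0
    exact ⟨t, ht.1, htf⟩
  have hSbdd : BddBelow S := ⟨0, fun t ht => ht.1⟩
  set t₀ := sInf S with ht₀def
  have ht₀mem : t₀ ∈ S := hSclosed.csInf_mem hSne hSbdd
  have hsfront : s ∉ frontier P := by
    simp only [frontier, mem_diff, not_and, not_not]
    intro _; exact hs
  have ht₀pos : 0 < t₀ := by
    rcases lt_or_eq_of_le ht₀mem.1 with h | h
    · exact h
    · exfalso; apply hsfront
      have := ht₀mem.2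
      rw [← h] at this
      simpa using this
  refine ⟨t₀, ht₀pos, ht₀mem.2, fun u hu hut => ?_⟩
  -- all points strictly before t₀ are in the interior
  by_contra hnot
  have hnofront : ∀ w ∈ Icc (0:ℝ) u, s + w • d ∉ frontier P := by
    intro w hw hwf
    have : t₀ ≤ w := csInf_le hSbdd ⟨hw.1, hwf⟩
    linarith [hw.2]
  have hucompl : s + u • d ∈ Pᶜ := by
    intro hmem
    apply hnofront u ⟨hu.le, le_refl u⟩
    constructor
    · exact subset_closure hmem
    · exact hnot
  have hpre : IsPreconnected (Icc (0:ℝ) u) := isPreconnected_Icc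
  have hcover : Icc (0:ℝ) u ⊆ (fun w : ℝ => s + w • d) ⁻¹' (interior P) ∪
      (fun w : ℝ => s + w • d) ⁻¹' Pᶜ := by
    intro w hw
    rcases em (s + w • d ∈ P) with hmem | hmem
    · left
      have h2 := hnofront w hw
      simp only [frontier, mem_diff, not_and, not_not] at h2
      exact h2 (subset_closure hmem)
    · right; exact hmem
  have h1 : (Icc (0:ℝ) u ∩ ((fun w : ℝ => s + w • d) ⁻¹' (interior P))).Nonempty :=
    ⟨0, ⟨le_refl 0, hu.le⟩, by simpa using hs⟩
  have h2 : (Icc (0:ℝ) u ∩ ((fun w : ℝ => s + w • d) ⁻¹' Pᶜ)).Nonempty :=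
    ⟨u, ⟨hu.le, le_refl u⟩, hucompl⟩
  obtain ⟨w, hw, h3, h4⟩ := hpre _ _ (isOpen_interior.preimage hcont)
    (hPc.isOpen_compl.preimage hcont) hcover h1 h2
  exact h4 (interior_subset h3)


noncomputable def circ (θ : ℝ) : Plane :=
  (EuclideanSpace.equiv (Fin 2) ℝ).symm ![Real.cos θ, Real.sin θ]

lemma circ_apply0 (θ : ℝ) : circ θ 0 = Real.cos θ := rfl
lemma circ_apply1 (θ : ℝ) : circ θ 1 = Real.sin θ := rfl

lemma norm_circ (θ : ℝ) : ‖circ θ‖ = 1 := by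
  rw [EuclideanSpace.norm_eq]
  have : ∑ i : Fin 2, ‖circ θ i‖ ^ 2 = Real.cos θ ^ 2 + Real.sin θ ^ 2 := by
    rw [Fin.sum_univ_two, circ_apply0, circ_apply1]
    simp [sq_abs]
  rw [this, Real.cos_sq_add_sin_sq, Real.sqrt_one]

lemma circ_injOn {θ ψ : ℝ} (h : circ θ = circ ψ) (hd : |θ - ψ| < 2 * Real.pi) : θ = ψ := by
  have hc : Real.cos θ = Real.cos ψ := by rw [← circ_apply0, h, circ_apply0]
  have hs : Real.sin θ = Real.sin ψ := by rw [← circ_apply1, h, circ_apply1]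
  have := Real.Angle.cos_sin_inj hc hs
  rw [Real.Angle.angle_eq_iff_two_pi_dvd_sub] at this
  obtain ⟨k, hk⟩ := this
  have hπ : (0:ℝ) < 2 * Real.pi := by positivity
  rw [hk] at hd
  have : |(k:ℝ)| < 1 := by
    rw [abs_mul, abs_of_pos hπ] at hd
    by_contra hge
    push_neg at hge
    nlinarith [abs_nonneg (k:ℝ)]
  have hk0 : k = 0 := by
    have h1 : ((|k| : ℤ) : ℝ) = |(k:ℝ)| := Int.cast_abs
    rw [← h1] at this
    have h4 : |k| < 1 := by exact_mod_cast this
    exact Int.abs_lt_one_iff.mp h4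
  rw [hk0] at hk
  simp at hk
  linarith

lemma circ_surj {w : Plane} (hw : ‖w‖ = 1) : ∃ θ, circ θ = w := by
  set z : ℂ := ⟨w 0, w 1⟩ with hz
  have habs : ‖z‖ = 1 := by
    rw [Complex.norm_def, Complex.normSq_apply]
    rw [EuclideanSpace.norm_eq] at hw
    rw [show z.re = w 0 from rfl, show z.im = w 1 from rfl]
    rw [Fin.sum_univ_two] at hw
    have := hw
    simp only [Real.norm_eq_abs, sq_abs] at this
    -- this : sqrt (w 0 ^2 + w 1 ^2) = 1 => squares
    have h2 : w 0 ^ 2 + w 1 ^ 2 = 1 := by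
      have h3 := congrArg (fun x => x ^ 2) this
      simp only [one_pow] at h3
      rwa [Real.sq_sqrt (by positivity)] at h3
    rw [show w 0 * w 0 + w 1 * w 1 = w 0^2 + w 1^2 by ring, h2, Real.sqrt_one]
  have hz0 : z ≠ 0 := by
    intro h; rw [h] at habs; simp at habs
  refine ⟨Complex.arg z, ?_⟩
  have hcos : Real.cos (Complex.arg z) = w 0 := by
    rw [Complex.cos_arg hz0, habs]; simp [hz]
  have hsin : Real.sin (Complex.arg z) = w 1 := by
    rw [Complex.sin_arg, habs]; simp [hz]
  ext i
  fin_cases i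
  · exact hcos
  · exact hsin


lemma exists_unit_kernel (f : Plane →L[ℝ] ℝ) : ∃ w : Plane, ‖w‖ = 1 ∧ f w = 0 := by
  set e0 : Plane := EuclideanSpace.single (0 : Fin 2) (1:ℝ) with he0
  set e1 : Plane := EuclideanSpace.single (1 : Fin 2) (1:ℝ) with he1
  by_cases h : f e0 = 0 ∧ f e1 = 0
  · exact ⟨e0, by simp [he0, EuclideanSpace.norm_single], h.1⟩
  · set w : Plane := f e1 • e0 - f e0 • e1 with hw
    have hfw : f w = 0 := by
      rw [hw]; simp; ring
    have hcomp0 : w 0 = f e1 := by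
      simp [hw, he0, he1, PiLp.sub_apply, PiLp.smul_apply, EuclideanSpace.single_apply]
    have hcomp1 : w 1 = -(f e0) := by
      simp [hw, he0, he1, PiLp.sub_apply, PiLp.smul_apply, EuclideanSpace.single_apply]
    have hwne : w ≠ 0 := by
      intro h0
      apply h
      have h00 : w 0 = 0 := by rw [h0]; rfl
      have h01 : w 1 = 0 := by rw [h0]; rfl
      constructor
      · rw [hcomp1] at h01; linarith
      · rw [hcomp0] at h00; exact h00
    refine ⟨‖w‖⁻¹ • w, ?_, ?_⟩
    · rw [norm_smul, norm_inv, norm_norm, inv_mul_cancel₀ (norm_ne_zero_iff.mpr hwne)]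
    · rw [map_smul, hfw, smul_zero]


lemma continuous_circ : Continuous circ := by
  apply Continuous.comp
  · exact (EuclideanSpace.equiv (Fin 2) ℝ).symm.continuous
  · apply continuous_pi
    intro i
    fin_cases i
    · simpa using Real.continuous_cos
    · simpa using Real.continuous_sin

lemma interval_not_in_finite {B : Set Plane} (hB : B.Finite) {a b : ℝ} (hab : a < b)
    (hlen : b - a ≤ 1) (hsub : ∀ θ ∈ Ioo a b, circ θ ∈ B) : False := by
  have hinj : InjOn circ (Ioo a b) := by
    intro x hx y hy hxy
    apply circ_injOn hxy
    have h1 : |x - y| < 1 := by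
      rw [abs_sub_lt_iff]
      constructor <;> (obtain ⟨hx1, hx2⟩ := hx; obtain ⟨hy1, hy2⟩ := hy; linarith)
    linarith [Real.pi_gt_three]
  have him : (circ '' Ioo a b).Finite := hB.subset (by rintro _ ⟨θ, hθ, rfl⟩; exact hsub θ hθ)
  exact (Set.Ioo_infinite hab) (Set.Finite.of_finite_image him hinj)

noncomputable def dirMap (s : Plane) (x : Plane) : Plane := ‖x - s‖⁻¹ • (x - s)

lemma isCompact_seg (a b : Plane) : IsCompact (segment ℝ a b) := by
  rw [segment_eq_image ℝ a b]
  apply isCompact_Icc.image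
  continuity

lemma dirSet_closed {s : Plane} {a b : Plane} (hs : s ∉ segment ℝ a b) :
    IsClosed (dirMap s '' segment ℝ a b) := by
  apply IsCompact.isClosed
  apply (isCompact_seg a b).image_of_continuousOn
  apply ContinuousOn.smul (f := fun x => ‖x - s‖⁻¹) (g := fun x => x - s)
  · apply ContinuousOn.inv₀
    · exact (continuous_norm.comp (continuous_sub_right s)).continuousOn
    · intro x hx
      simp only [ne_eq, norm_eq_zero, sub_eq_zero]
      intro h; exact hs (h ▸ hx)
  · exact (continuous_sub_right s).continuousOn

lemma dirSet_sep {s : Plane} {a b : Plane} (hs : s ∉ segment ℝ a b) :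
    ∃ f : Plane →L[ℝ] ℝ, ∀ u ∈ dirMap s '' segment ℝ a b, 0 < f u := by
  obtain ⟨f, u, hfs, hfb⟩ := geometric_hahn_banach_point_closed (convex_segment a b)
    (isCompact_seg a b).isClosed hs
  refine ⟨f, ?_⟩
  rintro w ⟨x, hx, rfl⟩
  have hxs : x ≠ s := fun h => hs (h ▸ hx)
  have hpos : 0 < ‖x - s‖ := by
    simp only [norm_pos_iff, ne_eq, sub_eq_zero]; exact hxs
  have : 0 < f (x - s) := by
    rw [map_sub]
    linarith [hfb x hx]
  rw [dirMap, map_smul]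
  positivity

/-- **Proposition (initial coverage).** The visibility region `V₀(s)` of an
interior point `s` weakly covers at least three edges of `P`: there are three
distinct edges whose relative interiors contain points directly visible
from `s`. -/
theorem visibility_weakly_covers_three_edges (n : ℕ) (hn : 3 ≤ n)
    (P : Set Plane) (v : ℕ → Plane)
    (hP : IsSimplePolygon n P v) (s : Plane) (hs : s ∈ interior P) :
    ∃ i j l, i < n ∧ j < n ∧ l < n ∧ i ≠ j ∧ i ≠ l ∧ j ≠ l ∧
      (∃ t ∈ openSegment ℝ (v i) (v ((i + 1) % n)),
        openSegment ℝ s t ⊆ interior P) ∧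
      (∃ t ∈ openSegment ℝ (v j) (v ((j + 1) % n)),
        openSegment ℝ s t ⊆ interior P) ∧
      (∃ t ∈ openSegment ℝ (v l) (v ((l + 1) % n)),
        openSegment ℝ s t ⊆ interior P) := by
  obtain ⟨hPcomp, -, -, hfront, -⟩ := hP
  -- edges avoid the interior point s
  have hedge_sub : ∀ k < n, polyEdge n v k ⊆ frontier P := by
    intro k hk
    rw [hfront]
    exact subset_biUnion_of_mem (Finset.mem_range.mpr hk)
  have hs_not_front : s ∉ frontier P := by
    simp only [frontier, mem_diff, not_and, not_not]
    intro _; exact hs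
  have hs_not_edge : ∀ k < n, s ∉ polyEdge n v k := fun k hk hmem =>
    hs_not_front (hedge_sub k hk hmem)
  -- the finitely many bad directions (towards vertices)
  set bad : Set Plane := dirMap s '' (v '' {k | k < n}) with hbad
  have hbad_fin : bad.Finite := (((finite_Iio n).image v).image (dirMap s))
  -- visibility predicate
  set VisE : ℕ → Prop := fun k => k < n ∧
    ∃ t ∈ openSegment ℝ (v k) (v ((k + 1) % n)), openSegment ℝ s t ⊆ interior P
    with hVisE
  -- Step 1: every good unit direction sees some edge
  have hstep : ∀ d : Plane, ‖d‖ = 1 → d ∉ bad →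
      ∃ k, VisE k ∧ d ∈ dirMap s '' polyEdge n v k := by
    intro d hd1 hdb
    have hd0 : d ≠ 0 := by intro h; rw [h] at hd1; simp at hd1
    obtain ⟨t₀, ht₀, hxf, hint⟩ := exists_first_hit hPcomp hs d hd0
    set x := s + t₀ • d with hx
    have hdirx : dirMap s x = d := by
      have h1 : x - s = t₀ • d := by rw [hx]; abel
      rw [dirMap, h1, norm_smul, hd1, Real.norm_eq_abs, abs_of_pos ht₀, mul_one, smul_smul,
        inv_mul_cancel₀ ht₀.ne', one_smul]
    have hxe : ∃ k < n, x ∈ polyEdge n v k := by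
      rw [hfront] at hxf; simpa using hxf
    obtain ⟨k, hk, hxk⟩ := hxe
    have hxv : ∀ m < n, x ≠ v m := by
      intro m hm heq
      exact hdb ⟨v m, ⟨m, hm, rfl⟩, by rw [← heq]; exact hdirx⟩
    have hxo : x ∈ openSegment ℝ (v k) (v ((k + 1) % n)) := by
      have hins := insert_endpoints_openSegment (𝕜 := ℝ) (x := v k) (y := v ((k + 1) % n))
      rw [polyEdge, ← hins] at hxk
      rcases hxk with h | h | h
      · exact absurd h (hxv k hk)
      · exact absurd h (hxv _ (Nat.mod_lt _ (by omega)))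
      · exact h
    have hvis : openSegment ℝ s x ⊆ interior P := by
      rintro y ⟨a, b, ha, hb, hab, rfl⟩
      have hy : a • s + b • x = s + (b * t₀) • d := by
        rw [hx, smul_add, ← add_assoc, ← add_smul, hab, one_smul, smul_smul]
      rw [hy]
      apply hint
      · positivity
      · nlinarith
    exact ⟨k, ⟨hk, x, hxo, hvis⟩, x, hxk, hdirx⟩
  -- main contradiction argument
  by_contra hcon
  -- there exist i j such that every visible edge is i or j
  have htwo : ∃ i j, VisE i ∧ VisE j ∧ ∀ k, VisE k → k = i ∨ k = j := by
    have hgood : ∃ d : Plane, ‖d‖ = 1 ∧ d ∉ bad := by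
      by_contra hg
      push_neg at hg
      exact interval_not_in_finite hbad_fin (show (0:ℝ) < 1 by norm_num) (by norm_num)
        (fun θ _ => hg _ (norm_circ θ))
    obtain ⟨d₀, hd₀1, hd₀b⟩ := hgood
    obtain ⟨i, hVi, -⟩ := hstep d₀ hd₀1 hd₀b
    by_cases hone : ∀ k, VisE k → k = i
    · exact ⟨i, i, hVi, hVi, fun k hk => Or.inl (hone k hk)⟩
    · push_neg at hone
      obtain ⟨j, hVj, hji⟩ := hone
      refine ⟨i, j, hVi, hVj, fun k hk => ?_⟩
      by_contra hkk
      push_neg at hkk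
      exact hcon ⟨i, j, k, hVi.1, hVj.1, hk.1, Ne.symm hji, Ne.symm hkk.1, Ne.symm hkk.2,
        hVi.2, hVj.2, hk.2⟩
  obtain ⟨i, j, hVi, hVj, hij⟩ := htwo
  -- directions of the two edges
  set Di : Set Plane := dirMap s '' polyEdge n v i with hDi
  set Dj : Set Plane := dirMap s '' polyEdge n v j with hDj
  have hDclosed : IsClosed (Di ∪ Dj) :=
    (dirSet_closed (hs_not_edge i hVi.1)).union (dirSet_closed (hs_not_edge j hVj.1))
  -- every angle is covered
  have hcover : ∀ θ : ℝ, circ θ ∈ bad ∪ (Di ∪ Dj) := by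
    intro θ
    by_cases hb : circ θ ∈ bad
    · exact Or.inl hb
    · obtain ⟨k, hVk, hmem⟩ := hstep (circ θ) (norm_circ θ) hb
      rcases hij k hVk with rfl | rfl
      · exact Or.inr (Or.inl hmem)
      · exact Or.inr (Or.inr hmem)
  -- hence ALL angles land in Di ∪ Dj
  have hall : ∀ θ : ℝ, circ θ ∈ Di ∪ Dj := by
    intro θ
    by_contra hout
    have hU : IsOpen ((circ ⁻¹' (Di ∪ Dj))ᶜ) :=
      (hDclosed.preimage continuous_circ).isOpen_compl
    obtain ⟨ε, hε, hball⟩ := Metric.isOpen_iff.mp hU θ hout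
    set ε' := min ε 1 with hε'
    have hε'0 : 0 < ε' := lt_min hε (by norm_num)
    apply interval_not_in_finite hbad_fin (show θ < θ + ε' by linarith)
      (by have := min_le_right ε 1; simp only [hε']; linarith)
    intro ϑ hϑ
    have hϑball : ϑ ∈ Metric.ball θ ε := by
      rw [Metric.mem_ball, Real.dist_eq, abs_sub_lt_iff]
      obtain ⟨h1, h2⟩ := hϑ
      have := min_le_left ε 1
      constructor <;> linarith
    have hnot : circ ϑ ∉ Di ∪ Dj := hball hϑball
    rcases hcover ϑ with h | h
    · exact h
    · exact absurd h hnot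
  -- all unit vectors are in Di ∪ Dj
  have hunit : ∀ w : Plane, ‖w‖ = 1 → w ∈ Di ∪ Dj := by
    intro w hw
    obtain ⟨θ, rfl⟩ := circ_surj hw
    exact hall θ
  -- separating functionals
  obtain ⟨fi, hfi⟩ := dirSet_sep (hs_not_edge i hVi.1)
  obtain ⟨fj, hfj⟩ := dirSet_sep (hs_not_edge j hVj.1)
  obtain ⟨w, hw1, hw0⟩ := exists_unit_kernel fi
  have hwj : w ∈ Dj := by
    rcases hunit w hw1 with h | h
    · exact absurd hw0 (hfi w h).ne'
    · exact h
  have hwj' : -w ∈ Dj := by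
    rcases hunit (-w) (by rw [norm_neg, hw1]) with h | h
    · have := hfi (-w) h
      rw [map_neg, hw0] at this
      simp at this
    · exact h
  have h1 := hfj w hwj
  have h2 := hfj (-w) hwj'
  rw [map_neg] at h2
  linarith
end

section
/- Let P be a simple polygon with n ≥ 3 vertices and let s be a point of the interior of P that does not lie on the line spanned by any edge of P. For each edge e of P that is weakly visible from s (i.e., the relative interior of e contains a point t with the relative interior of segment[s, t] contained in the interior of P), let H(e) be the closed half-plane bounded by the line spanned by e that contains s. Then the intersection of the half-planes H(e), taken over all edges e of P weakly visible from s, is a bounded subset of ℝ². -/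
open Set

/-- The 2D cross product `(q - p) × (x - p)`, whose sign tells on which side of
the line through `p` and `q` the point `x` lies. -/
noncomputable def crossProd (p q x : Plane) : ℝ :=
  (q 0 - p 0) * (x 1 - p 1) - (q 1 - p 1) * (x 0 - p 0)

/-- The closed half-plane bounded by the line through `p` and `q` that
contains `s` (assuming `s` is not on that line): the set of points `x` lying
on the same side of the line as `s`, or on the line itself. -/
def halfPlane (p q s : Plane) : Set Plane :=
  {x | 0 ≤ crossProd p q s * crossProd p q x}


lemma plane_ext {a b : Plane} (h0 : a 0 = b 0) (h1 : a 1 = b 1) : a = b := by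
  apply PiLp.ext; intro j; fin_cases j
  · exact h0
  · exact h1

lemma crossProd_ne_zero {a b z : Plane} (hab : a ≠ b)
    (h : z ∉ affineSpan ℝ ({a, b} : Set Plane)) : crossProd a b z ≠ 0 := by
  intro h0
  apply h
  have hab' : a 0 ≠ b 0 ∨ a 1 ≠ b 1 := by
    by_contra hc
    push_neg at hc
    exact hab (plane_ext hc.1 hc.2)
  simp only [crossProd] at h0
  rcases hab' with h' | h'
  · have hz : z = AffineMap.lineMap a b ((z 0 - a 0) / (b 0 - a 0)) := by
      have hd : b 0 - a 0 ≠ 0 := sub_ne_zero.2 (Ne.symm h')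
      apply plane_ext <;>
        simp only [AffineMap.lineMap_apply_module, PiLp.add_apply, PiLp.smul_apply,
          PiLp.sub_apply, smul_eq_mul]
      · field_simp; ring
      · field_simp
        linear_combination h0
    rw [hz]; exact AffineMap.lineMap_mem_affineSpan_pair _ _ _
  · have hz : z = AffineMap.lineMap a b ((z 1 - a 1) / (b 1 - a 1)) := by
      have hd : b 1 - a 1 ≠ 0 := sub_ne_zero.2 (Ne.symm h')
      apply plane_ext <;>
        simp only [AffineMap.lineMap_apply_module, PiLp.add_apply, PiLp.smul_apply,
          PiLp.sub_apply, smul_eq_mul]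
      · field_simp
        linear_combination -h0
      · field_simp; ring
    rw [hz]; exact AffineMap.lineMap_mem_affineSpan_pair _ _ _

lemma crossProd_combo (p q : Plane) {α β : ℝ} (hsum : α + β = 1) (x y : Plane) :
    crossProd p q (α • x + β • y) = α * crossProd p q x + β * crossProd p q y := by
  simp only [crossProd, PiLp.add_apply, PiLp.smul_apply, smul_eq_mul]
  linear_combination ((q 0 - p 0) * p 1 - (q 1 - p 1) * p 0) * hsum

lemma halfPlane_combo {p q s x y : Plane} (hx : x ∈ halfPlane p q s)
    (hy : y ∈ halfPlane p q s) {α β : ℝ} (hα : 0 ≤ α) (hβ : 0 ≤ β) (hsum : α + β = 1) :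
    α • x + β • y ∈ halfPlane p q s := by
  simp only [halfPlane, mem_setOf_eq] at *
  rw [crossProd_combo p q hsum]
  nlinarith [mul_nonneg hα hx, mul_nonneg hβ hy]

open Metric Bornology

lemma exists_exit {P : Set Plane} (hPc : IsCompact P) {s : Plane} (hs : s ∈ interior P)
    {u : Plane} (hu : u ≠ 0) :
    ∃ T : ℝ, 0 < T ∧ s + T • u ∈ frontier P ∧ ∀ r, 0 ≤ r → r < T → s + r • u ∈ interior P := by
  have hun : 0 < ‖u‖ := norm_pos_iff.2 hu
  have key : ∀ r r' : ℝ, dist (s + r • u) (s + r' • u) = |r - r'| * ‖u‖ := by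
    intro r r'
    rw [dist_eq_norm]
    have h1 : (s + r • u) - (s + r' • u) = (r - r') • u := by module
    rw [h1, norm_smul, Real.norm_eq_abs]
  obtain ⟨R, hR⟩ := hPc.isBounded.subset_closedBall s
  set A : Set ℝ := {t : ℝ | 0 ≤ t ∧ ∀ r, 0 ≤ r → r ≤ t → s + r • u ∈ interior P} with hA
  have hA0 : (0:ℝ) ∈ A := by
    refine ⟨le_refl _, fun r hr hr' => ?_⟩
    have : r = 0 := le_antisymm hr' hr
    subst this
    simpa using hs
  have hbdd : BddAbove A := by
    refine ⟨R / ‖u‖, fun t ht => ?_⟩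
    have h1 : s + t • u ∈ P := interior_subset (ht.2 t ht.1 le_rfl)
    have h2 : dist (s + t • u) s ≤ R := by simpa [mem_closedBall] using hR h1
    have h3 : dist (s + t • u) s = t * ‖u‖ := by
      have := key t 0
      simpa [abs_of_nonneg ht.1] using this
    rw [h3] at h2
    rw [le_div_iff₀ hun]
    exact h2
  obtain ⟨δ, hδ, hball⟩ := Metric.isOpen_iff.1 isOpen_interior s hs
  have ht₁ : δ / (2 * ‖u‖) ∈ A := by
    constructor
    · positivity
    · intro r hr hrt
      apply hball
      rw [mem_ball]
      have : dist (s + r • u) s = r * ‖u‖ := by simpa [abs_of_nonneg hr] using key r 0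
      rw [this]
      have : r * ‖u‖ ≤ δ / 2 := by
        rw [div_mul_eq_div_div] at hrt
        calc r * ‖u‖ ≤ (δ / 2 / ‖u‖) * ‖u‖ := by nlinarith
        _ = δ / 2 := by field_simp
      linarith
  set T := sSup A with hT
  have hTpos : 0 < T := lt_of_lt_of_le (by positivity) (le_csSup hbdd ht₁)
  have hint : ∀ r, 0 ≤ r → r < T → s + r • u ∈ interior P := by
    intro r hr hrT
    obtain ⟨t, htA, hrt⟩ := exists_lt_of_lt_csSup ⟨0, hA0⟩ hrT
    exact htA.2 r hr hrt.le
  have hcl : s + T • u ∈ closure (interior P) := by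
    rw [Metric.mem_closure_iff]
    intro ε hε
    set δ' := min (T / 2) (ε / (2 * ‖u‖)) with hδ'
    have hδ'pos : 0 < δ' := by positivity
    refine ⟨s + (T - δ') • u, hint _ (by simp only [hδ']; nlinarith [min_le_left (T/2) (ε / (2 * ‖u‖))]) (by linarith), ?_⟩
    rw [key]
    have h1 : |T - (T - δ')| = δ' := by rw [abs_of_nonneg] <;> linarith
    rw [h1]
    have h2 : δ' ≤ ε / (2 * ‖u‖) := min_le_right _ _
    have : δ' * ‖u‖ ≤ ε / 2 := by
      rw [div_mul_eq_div_div] at h2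
      calc δ' * ‖u‖ ≤ (ε / 2 / ‖u‖) * ‖u‖ := by nlinarith
      _ = ε / 2 := by field_simp
    linarith
  have hmemP : s + T • u ∈ P := by
    have := closure_mono (interior_subset : interior P ⊆ P) hcl
    rwa [hPc.isClosed.closure_eq] at this
  have hnotint : s + T • u ∉ interior P := by
    intro hTi
    obtain ⟨δ₂, hδ₂, hball₂⟩ := Metric.isOpen_iff.1 isOpen_interior _ hTi
    have hTA : T + δ₂ / (2 * ‖u‖) ∈ A := by
      constructor
      · positivity
      · intro r hr hrt
        rcases lt_or_ge r T with h | h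
        · exact hint r hr h
        · apply hball₂
          rw [mem_ball, key]
          have h1 : |r - T| = r - T := abs_of_nonneg (by linarith)
          rw [h1]
          have : (r - T) * ‖u‖ ≤ δ₂ / 2 := by
            have h2 : r - T ≤ δ₂ / (2 * ‖u‖) := by linarith
            rw [div_mul_eq_div_div] at h2
            calc (r - T) * ‖u‖ ≤ (δ₂ / 2 / ‖u‖) * ‖u‖ := by nlinarith
            _ = δ₂ / 2 := by field_simp
          linarith
    have := le_csSup hbdd hTA
    have h9 : δ₂ / (2 * ‖u‖) ≤ 0 := by linarith
    have h10 : 0 < δ₂ / (2 * ‖u‖) := by positivity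
    linarith
  refine ⟨T, hTpos, ?_, hint⟩
  rw [hPc.isClosed.frontier_eq]
  exact ⟨hmemP, hnotint⟩

lemma cross_smul_line (a b z w : Plane) (t : ℝ) :
    crossProd a b (z + t • w) = crossProd a b z + t * ((b 0 - a 0) * w 1 - (b 1 - a 1) * w 0) := by
  simp [crossProd, PiLp.add_apply, PiLp.smul_apply, smul_eq_mul]; ring

lemma bound_of_good (n : ℕ) (hn : 3 ≤ n) (P : Set Plane) (v : ℕ → Plane)
    (hP : IsSimplePolygon n P v) (s : Plane) (hs : s ∈ interior P)
    (hline : ∀ i < n, s ∉ affineSpan ℝ ({v i, v ((i + 1) % n)} : Set Plane))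
    (R : ℝ) (hR : P ⊆ Metric.closedBall s R) (x : Plane) (hxs : x ≠ s)
    (hgood : ∀ j < n, ∀ t : ℝ, 0 < t → s + t • (x - s) ≠ v j)
    (hx : x ∈ ⋂ i ∈ {i : ℕ | i < n ∧ ∃ t ∈ openSegment ℝ (v i) (v ((i + 1) % n)),
          openSegment ℝ s t ⊆ interior P}, halfPlane (v i) (v ((i + 1) % n)) s) :
    dist x s ≤ R := by
  obtain ⟨hPc, hconn, hinj, hfr, hedges⟩ := hP
  have hu : x - s ≠ 0 := sub_ne_zero.2 hxs
  obtain ⟨T, hT, hEfr, hint⟩ := exists_exit hPc hs hu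
  set u := x - s with hudef
  set E := s + T • u with hE
  have hEP : E ∈ P := hPc.isClosed.frontier_subset hEfr
  have hfrmem := hEfr
  rw [hfr] at hfrmem
  simp only [Set.mem_iUnion, Finset.mem_range, polyEdge] at hfrmem
  obtain ⟨i, hi, hseg⟩ := hfrmem
  have hi'n : (i + 1) % n < n := Nat.mod_lt _ (by omega)
  have hii' : i ≠ (i + 1) % n := by
    rcases Nat.lt_or_ge (i+1) n with h | h
    · rw [Nat.mod_eq_of_lt h]; omega
    · have h2 : i + 1 = n := by omega
      rw [h2, Nat.mod_self]; omega
  have hab : v i ≠ v ((i + 1) % n) := fun hvv => hii' (hinj i hi _ hi'n hvv)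
  have hEa : E ≠ v i := hgood i hi T hT
  have hEb : E ≠ v ((i + 1) % n) := hgood _ hi'n T hT
  have hEopen : E ∈ openSegment ℝ (v i) (v ((i + 1) % n)) :=
    mem_openSegment_of_ne_left_right (Ne.symm hEa) (Ne.symm hEb) hseg
  have hvis : i ∈ {i : ℕ | i < n ∧ ∃ t ∈ openSegment ℝ (v i) (v ((i + 1) % n)),
      openSegment ℝ s t ⊆ interior P} := by
    refine ⟨hi, E, hEopen, ?_⟩
    intro z hz
    rw [openSegment_eq_image] at hz
    obtain ⟨θ, hθ, rfl⟩ := hz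
    have hzeq : (1 - θ) • s + θ • E = s + (θ * T) • u := by rw [hE]; module
    show (1 - θ) • s + θ • E ∈ interior P
    rw [hzeq]
    exact hint _ (by nlinarith [hθ.1]) (by nlinarith [hθ.2, hT])
  have hxH : 0 ≤ crossProd (v i) (v ((i + 1) % n)) s * crossProd (v i) (v ((i + 1) % n)) x :=
    Set.mem_iInter₂.mp hx i hvis
  set a := v i with hadef
  set b := v ((i + 1) % n) with hbdef
  set c0 := crossProd a b s with hc0
  have hc0ne : c0 ≠ 0 := crossProd_ne_zero hab (hline i hi)
  have hcE : crossProd a b E = 0 := by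
    obtain ⟨p, q, hp, hq, hpq, hE'⟩ := hseg
    rw [← hE', crossProd_combo a b hpq a b]
    have ha0 : crossProd a b a = 0 := by simp [crossProd]
    have hb0 : crossProd a b b = 0 := by simp [crossProd]; ring
    rw [ha0, hb0]; ring
  set D := (b 0 - a 0) * u 1 - (b 1 - a 1) * u 0 with hD
  have hcE' : c0 + T * D = 0 := by
    rw [hc0, hD, ← cross_smul_line a b s u T, ← hE, hcE]
  have hx1 : x = s + (1:ℝ) • u := by rw [hudef]; module
  have hcx : crossProd a b x = c0 + 1 * D := by
    rw [hc0, hD, ← cross_smul_line a b s u 1, ← hx1]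
  have hDne : D ≠ 0 := by
    intro h
    rw [h] at hcE'
    apply hc0ne
    linarith
  have hTge1 : (1:ℝ) ≤ T := by
    rw [hcx] at hxH
    have hc0eq : c0 = -(T * D) := by linarith
    rw [hc0eq] at hxH
    nlinarith [hxH, mul_pos hT (mul_self_pos.mpr hDne)]
  have hdx : dist x s = ‖u‖ := by rw [dist_eq_norm, hudef]
  have hdE : dist E s = T * ‖u‖ := by
    rw [dist_eq_norm, hE]
    have : s + T • u - s = T • u := by module
    rw [this, norm_smul, Real.norm_eq_abs, abs_of_pos hT]
  have hER : dist E s ≤ R := by simpa [Metric.mem_closedBall] using hR hEP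
  rw [hdx]
  rw [hdE] at hER
  nlinarith [norm_nonneg u]

lemma dist_coords (x s : Plane) : dist x s = Real.sqrt ((x 0 - s 0)^2 + (x 1 - s 1)^2) := by
  rw [EuclideanSpace.dist_eq]
  congr 1
  rw [Fin.sum_univ_two]
  simp [Real.dist_eq, sq_abs]

lemma vertex_ne {n : ℕ} (hn : 3 ≤ n) {v : ℕ → Plane}
    (hinj : ∀ i < n, ∀ j < n, v i = v j → i = j) {i : ℕ} (hi : i < n) :
    v i ≠ v ((i + 1) % n) := by
  have hi'n : (i + 1) % n < n := Nat.mod_lt _ (by omega)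
  have hii' : i ≠ (i + 1) % n := by
    rcases Nat.lt_or_ge (i + 1) n with h | h
    · rw [Nat.mod_eq_of_lt h]; omega
    · have h2 : i + 1 = n := by omega
      rw [h2, Nat.mod_self]; omega
  exact fun hvv => hii' (hinj i hi _ hi'n hvv)

set_option maxHeartbeats 2000000 in
/-- **Proposition (boundedness).** For an interior point `s` of a simple
polygon `P`, not lying on the line spanned by any edge, the intersection of
the closed half-planes `H(e)`, over all edges `e` of `P` weakly visible
from `s`, bounded by the line spanned by `e` and containing `s`, is bounded. -/
theorem iInter_halfPlane_isBounded (n : ℕ) (hn : 3 ≤ n)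
    (P : Set Plane) (v : ℕ → Plane)
    (hP : IsSimplePolygon n P v) (s : Plane) (hs : s ∈ interior P)
    (hline : ∀ i < n, s ∉ affineSpan ℝ ({v i, v ((i + 1) % n)} : Set Plane)) :
    Bornology.IsBounded
      (⋂ i ∈ {i : ℕ | i < n ∧ ∃ t ∈ openSegment ℝ (v i) (v ((i + 1) % n)),
          openSegment ℝ s t ⊆ interior P},
        halfPlane (v i) (v ((i + 1) % n)) s) := by
  obtain ⟨R, hR⟩ := hP.1.isBounded.subset_closedBall s
  have hsP : s ∈ P := interior_subset hs
  have hR0 : 0 ≤ R := by simpa using hR hsP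
  apply Bornology.IsBounded.subset (Metric.isBounded_closedBall (x := s) (r := R))
  intro x hx
  rw [Metric.mem_closedBall]
  by_contra hcon
  push_neg at hcon
  have hd0 : 0 < dist x s := lt_of_le_of_lt hR0 hcon
  have hxs : x ≠ s := dist_pos.mp hd0
  -- the open set where all cross products have the right sign
  have hUopen : IsOpen (⋂ i ∈ Finset.range n, {b : Plane |
      0 < crossProd (v i) (v ((i + 1) % n)) s * crossProd (v i) (v ((i + 1) % n)) b}) := by
    apply isOpen_biInter_finset
    intro i _
    have hc : Continuous fun b : Plane =>
        crossProd (v i) (v ((i + 1) % n)) s * crossProd (v i) (v ((i + 1) % n)) b := by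
      unfold crossProd
      exact continuous_const.mul (by fun_prop)
    exact isOpen_lt continuous_const hc
  have hsU : s ∈ ⋂ i ∈ Finset.range n, {b : Plane |
      0 < crossProd (v i) (v ((i + 1) % n)) s * crossProd (v i) (v ((i + 1) % n)) b} := by
    simp only [Set.mem_iInter, Finset.mem_range, Set.mem_setOf_eq]
    intro i hi
    exact mul_self_pos.mpr (crossProd_ne_zero (vertex_ne hn hP.2.2.1 hi) (hline i hi))
  obtain ⟨ε, hε, hball⟩ := Metric.isOpen_iff.1 hUopen s hsU
  -- the rotated vector
  set w : Plane := (WithLp.equiv 2 (Fin 2 → ℝ)).symm ![-(x 1 - s 1), x 0 - s 0] with hwdef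
  have hw0 : w 0 = -(x 1 - s 1) := by rw [hwdef]; simp
  have hw1 : w 1 = x 0 - s 0 := by rw [hwdef]; simp
  set d := dist x s with hd
  set lam := (d - R) / (2 * d) with hlam
  have hlam0 : 0 < lam := by apply div_pos <;> linarith
  have hlam1 : lam < 1 := by
    rw [hlam, div_lt_one (by linarith)]; linarith
  have h1lam : (1 - lam) * d = (d + R) / 2 := by
    rw [hlam]; field_simp; ring
  have hdS : d = Real.sqrt ((x 0 - s 0)^2 + (x 1 - s 1)^2) := dist_coords x s
  have hSd : (x 0 - s 0)^2 + (x 1 - s 1)^2 = d^2 := by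
    rw [hdS, Real.sq_sqrt (by positivity)]
  have hSpos : 0 < (x 0 - s 0)^2 + (x 1 - s 1)^2 := by rw [hSd]; positivity
  -- the finite set of bad parameters
  set F : Finset ℝ := (Finset.range n).image (fun j =>
    (1 - lam) * ((v j 1 - s 1) * (x 0 - s 0) - (v j 0 - s 0) * (x 1 - s 1)) /
      ((v j 0 - s 0) * (x 0 - s 0) + (v j 1 - s 1) * (x 1 - s 1)) / lam) with hF
  have hinf : (Set.Ioo (0:ℝ) (ε / (‖w‖ + 1))).Infinite :=
    Set.Ioo_infinite (by positivity)
  obtain ⟨μ, ⟨⟨hμ0, hμlt⟩, hμF⟩⟩ := (hinf.diff F.finite_toSet).nonempty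
  set b := s + μ • w with hb
  have hbball : b ∈ Metric.ball s ε := by
    rw [Metric.mem_ball, hb]
    have h2 : dist (s + μ • w) s = μ * ‖w‖ := by
      rw [dist_eq_norm]
      have h3 : s + μ • w - s = μ • w := by module
      rw [h3, norm_smul, Real.norm_eq_abs, abs_of_pos hμ0]
    rw [h2]
    have h5 : μ * (‖w‖ + 1) < ε := (lt_div_iff₀ (by positivity)).mp hμlt
    nlinarith [norm_nonneg w, hμ0]
  have hbH : ∀ i < n, b ∈ halfPlane (v i) (v ((i + 1) % n)) s := by
    intro i hi
    have h2 := hball hbball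
    simp only [Set.mem_iInter, Finset.mem_range, Set.mem_setOf_eq] at h2
    exact le_of_lt (h2 i hi)
  set y := (1 - lam) • x + lam • b with hy
  have hyK : y ∈ ⋂ i ∈ {i : ℕ | i < n ∧ ∃ t ∈ openSegment ℝ (v i) (v ((i + 1) % n)),
      openSegment ℝ s t ⊆ interior P}, halfPlane (v i) (v ((i + 1) % n)) s := by
    rw [Set.mem_iInter₂]
    intro i hi
    exact halfPlane_combo (Set.mem_iInter₂.mp hx i hi) (hbH i hi.1)
      (by linarith) (le_of_lt hlam0) (by ring)
  have hy0 : y 0 - s 0 = (1 - lam) * (x 0 - s 0) - lam * μ * (x 1 - s 1) := by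
    rw [hy, hb]
    simp only [PiLp.add_apply, PiLp.smul_apply, smul_eq_mul, hw0]
    ring
  have hy1 : y 1 - s 1 = (1 - lam) * (x 1 - s 1) + lam * μ * (x 0 - s 0) := by
    rw [hy, hb]
    simp only [PiLp.add_apply, PiLp.smul_apply, smul_eq_mul, hw1]
    ring
  clear_value y b F lam d w
  have hRy : R < dist y s := by
    rw [dist_coords y s, hy0, hy1]
    rw [Real.lt_sqrt hR0]
    have h3 : R < (1 - lam) * d := by rw [h1lam]; linarith
    have h4 : R^2 < ((1 - lam) * d)^2 := by
      have := pow_lt_pow_left₀ h3 hR0 (two_ne_zero)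
      simpa using this
    have h5 : ((1 - lam) * (x 0 - s 0) - lam * μ * (x 1 - s 1)) ^ 2 +
        ((1 - lam) * (x 1 - s 1) + lam * μ * (x 0 - s 0)) ^ 2 =
        (1 - lam)^2 * d^2 + (lam * μ)^2 * d^2 := by
      linear_combination ((1 - lam)^2 + (lam * μ)^2) * hSd
    rw [h5]
    have h6 : ((1 - lam) * d)^2 = (1 - lam)^2 * d^2 := by ring
    rw [h6] at h4
    have h7 : 0 ≤ (lam * μ)^2 * d^2 := by positivity
    linarith
  have hys : y ≠ s := dist_pos.mp (lt_of_le_of_lt hR0 hRy)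
  have hygood : ∀ j < n, ∀ t : ℝ, 0 < t → s + t • (y - s) ≠ v j := by
    intro j hj t ht heq
    have e0 : (s + t • (y - s)) 0 = v j 0 := by rw [heq]
    have e1 : (s + t • (y - s)) 1 = v j 1 := by rw [heq]
    simp only [PiLp.add_apply, PiLp.smul_apply, PiLp.sub_apply, smul_eq_mul] at e0 e1
    have hA : t * ((1 - lam) * ((x 0 - s 0)^2 + (x 1 - s 1)^2)) =
        (v j 0 - s 0) * (x 0 - s 0) + (v j 1 - s 1) * (x 1 - s 1) := by
      linear_combination (x 0 - s 0) * e0 + (x 1 - s 1) * e1 -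
        (t * (x 0 - s 0)) * hy0 - (t * (x 1 - s 1)) * hy1
    have hB : t * (lam * μ * ((x 0 - s 0)^2 + (x 1 - s 1)^2)) =
        (v j 1 - s 1) * (x 0 - s 0) - (v j 0 - s 0) * (x 1 - s 1) := by
      linear_combination (x 0 - s 0) * e1 - (x 1 - s 1) * e0 -
        (t * (x 0 - s 0)) * hy1 + (t * (x 1 - s 1)) * hy0
    have hApos : 0 < (v j 0 - s 0) * (x 0 - s 0) + (v j 1 - s 1) * (x 1 - s 1) := by
      nlinarith [hA, mul_pos ht (mul_pos (show (0:ℝ) < 1 - lam by linarith) hSpos)]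
    apply hμF
    simp only [hF, Finset.coe_image, Set.mem_image, Finset.mem_coe, Finset.mem_range]
    refine ⟨j, hj, ?_⟩
    rw [div_eq_iff hlam0.ne', div_eq_iff hApos.ne']
    linear_combination (μ * lam) * hA - (1 - lam) * hB
  have := bound_of_good n hn P v hP s hs hline R hR y hys hygood hyK
  linarith
end
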